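/- Let $k \leq m/2$ and for each $i \in \{1, \dots, m\}$ (indices modulo $m$) let $\Phi_i^k(T)$ be the set of tours obtained from tour $T$ by rearranging and re-selecting only the vertices at positions $i+1, \dots, i+k$, and let $A_i^k(T) = \{T' \in \Phi_i^k(T) : T'_{i+1} \neq T_{i+1}\}$. Then the sets $A_1^k(T), \dots, A_m^k(T)$ are pairwise disjoint and $\{T\} \cup \bigcup_{i=1}^m A_i^k(T) = \bigcup_{i=1}^m \Phi_i^k(T)$. -/

import Mathlib

/-- The window of `k` cyclic positions `i+1, …, i+k`. -/
def foWindow (m k : ℕ) (i : ZMod m) : Finset (ZMod m) :=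
  (Finset.range k).image fun t : ℕ => i + 1 + (t : ZMod m)

/-- `Φ_i^k(T)`: the tours agreeing with `T` outside the window `{i+1, …, i+k}` and visiting,
within the window, the same clusters (in arbitrary order, with arbitrary vertex re-selections
within those clusters). -/
def foPhi {V C : Type*} [DecidableEq C] (m k : ℕ) (cl : V → C) (T : ZMod m → V)
    (i : ZMod m) : Set (ZMod m → V) :=
  {T' | (∀ j, j ∉ foWindow m k i → T' j = T j) ∧
    (foWindow m k i).image (cl ∘ T') = (foWindow m k i).image (cl ∘ T)}

/-- `A_i^k(T)`: the tours of `Φ_i^k(T)` whose vertex at position `i+1` differs from `T`'s. -/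
def foA {V C : Type*} [DecidableEq C] (m k : ℕ) (cl : V → C) (T : ZMod m → V)
    (i : ZMod m) : Set (ZMod m → V) :=
  {T' ∈ foPhi m k cl T i | T' (i + 1) ≠ T (i + 1)}

/-- For `k ≤ m/2`, the sets `A_1^k(T), …, A_m^k(T)` are pairwise disjoint and
`{T} ∪ ⋃_i A_i^k(T) = ⋃_i Φ_i^k(T)`. -/
theorem fragment_opt_partition {V C : Type*} [DecidableEq C] (m k : ℕ)
    (hm : 0 < m) (hk : 2 * k ≤ m) (cl : V → C) (T : ZMod m → V)
    (hinj : Function.Injective (cl ∘ T)) :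
    (∀ i j : ZMod m, i ≠ j → Disjoint (foA m k cl T i) (foA m k cl T j)) ∧
    ({T} ∪ ⋃ i : ZMod m, foA m k cl T i) = ⋃ i : ZMod m, foPhi m k cl T i := by
  classical
  haveI : NeZero m := ⟨hm.ne'⟩
  have castinj : ∀ a b : ℕ, a < m → b < m → (a : ZMod m) = b → a = b := by
    intro a b ha hb h
    have := congrArg ZMod.val h
    rwa [ZMod.val_cast_of_lt ha, ZMod.val_cast_of_lt hb] at this
  constructor
  · -- disjointness
    intro i j hij
    rw [Set.disjoint_left]
    rintro T' ⟨⟨houti, _⟩, hnei⟩ ⟨⟨houtj, _⟩, hnej⟩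
    have hi1 : i + 1 ∈ foWindow m k j := by
      by_contra h; exact hnei (houtj _ h)
    have hj1 : j + 1 ∈ foWindow m k i := by
      by_contra h; exact hnej (houti _ h)
    obtain ⟨t, ht, hti⟩ := Finset.mem_image.mp hi1
    obtain ⟨s, hs, hsj⟩ := Finset.mem_image.mp hj1
    rw [Finset.mem_range] at ht hs
    have htne : t ≠ 0 := by
      rintro rfl
      simp only [Nat.cast_zero, add_zero] at hti
      exact hij (add_right_cancel hti).symm
    have hst : ((s + t : ℕ) : ZMod m) = ((0 : ℕ) : ZMod m) := by
      push_cast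
      linear_combination hti + hsj
    have := castinj (s + t) 0 (by omega) hm hst
    omega
  · -- the union
    ext T'
    simp only [Set.mem_union, Set.mem_singleton_iff, Set.mem_iUnion, foA,
      Set.mem_setOf_eq]
    constructor
    · rintro (rfl | ⟨i, hA, _⟩)
      · exact ⟨0, fun j _ => rfl, rfl⟩
      · exact ⟨i, hA⟩
    · rintro ⟨i, hout, himg⟩
      by_cases hTT : T' = T
      · exact Or.inl hTT
      right
      set F : ℕ → ZMod m := fun t => i + 1 + (t : ZMod m) with hF
      have hFinj : ∀ a b : ℕ, a < m → b < m → F a = F b → a = b := by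
        intro a b ha hb h
        exact castinj a b ha hb (by simpa [hF] using add_left_cancel h)
      have hWin : foWindow m k i = (Finset.range k).image F := rfl
      have hex : ∃ t, t < k ∧ T' (F t) ≠ T (F t) := by
        obtain ⟨j, hj⟩ := Function.ne_iff.mp hTT
        have hjW : j ∈ foWindow m k i := by
          by_contra h; exact hj (hout _ h)
        rw [hWin] at hjW
        obtain ⟨t, ht, rfl⟩ := Finset.mem_image.mp hjW
        exact ⟨t, Finset.mem_range.mp ht, hj⟩
      obtain ⟨ht0k, ht0ne⟩ := Nat.find_spec hex
      set t0 := Nat.find hex with ht0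
      have hmin : ∀ s, s < t0 → T' (F s) = T (F s) := by
        intro s hs
        have h' := Nat.find_min hex hs
        by_contra h
        exact h' ⟨lt_trans hs ht0k, h⟩
      have hbnd : t0 + k < m := by omega
      have hkm : k ≤ m := by omega
      -- characterization of the shifted window
      have hW' : foWindow m k (i + (t0 : ZMod m)) =
          (Finset.Ico t0 (t0 + k)).image F := by
        ext j
        simp only [foWindow, Finset.mem_image, Finset.mem_range, Finset.mem_Ico]
        constructor
        · rintro ⟨s, hs, rfl⟩
          refine ⟨t0 + s, ⟨Nat.le_add_right _ _, by omega⟩, ?_⟩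
          simp only [hF]
          push_cast
          ring
        · rintro ⟨u, ⟨hu1, hu2⟩, rfl⟩
          refine ⟨u - t0, by omega, ?_⟩
          simp only [hF]
          rw [Nat.cast_sub hu1]
          ring
      have hFt0 : i + (t0 : ZMod m) + 1 = F t0 := by
        simp only [hF]; ring
      -- agreement beyond the original window
      have hSout : ∀ u, k ≤ u → u < m → T' (F u) = T (F u) := by
        intro u hu hum
        apply hout
        rw [hWin]
        intro hmem
        obtain ⟨v, hv, hvu⟩ := Finset.mem_image.mp hmem
        rw [Finset.mem_range] at hv
        have := hFinj v u (by omega) hum hvu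
        omega
      refine ⟨i + (t0 : ZMod m), ⟨?_, ?_⟩, ?_⟩
      · -- agreement outside the shifted window
        intro j hj
        rw [hW'] at hj
        by_cases hjW : j ∈ foWindow m k i
        · rw [hWin] at hjW
          obtain ⟨v, hv, rfl⟩ := Finset.mem_image.mp hjW
          rw [Finset.mem_range] at hv
          rcases lt_or_ge v t0 with hvt | hvt
          · exact hmin v hvt
          · exact absurd (Finset.mem_image.mpr
              ⟨v, Finset.mem_Ico.mpr ⟨hvt, by omega⟩, rfl⟩) hj
        · exact hout j hjW
      · -- image (cluster) equality over the shifted window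
        rw [hW', Finset.image_image, Finset.image_image]
        have hR : Finset.range k = Finset.range t0 ∪ Finset.Ico t0 k := by
          rw [Finset.range_eq_Ico, Finset.range_eq_Ico]
          exact (Finset.Ico_union_Ico_eq_Ico (Nat.zero_le t0) (le_of_lt ht0k)).symm
        have hIco : Finset.Ico t0 (t0 + k) = Finset.Ico t0 k ∪ Finset.Ico k (t0 + k) := by
          rw [Finset.Ico_union_Ico_eq_Ico (le_of_lt ht0k) (by omega)]
        rw [hWin, Finset.image_image, Finset.image_image, hR,
          Finset.image_union, Finset.image_union] at himg
        have hP : (Finset.range t0).image ((cl ∘ T') ∘ F) =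
            (Finset.range t0).image ((cl ∘ T) ∘ F) := by
          apply Finset.image_congr
          intro x hx
          simp only [Finset.coe_range, Set.mem_Iio] at hx
          simp only [Function.comp_apply, hmin x hx]
        have hS : (Finset.Ico k (t0 + k)).image ((cl ∘ T') ∘ F) =
            (Finset.Ico k (t0 + k)).image ((cl ∘ T) ∘ F) := by
          apply Finset.image_congr
          intro x hx
          simp only [Finset.coe_Ico, Set.mem_Ico] at hx
          simp only [Function.comp_apply, hSout x hx.1 (by omega)]
        rw [hP] at himg
        have hdisj : Disjoint ((Finset.range t0).image ((cl ∘ T) ∘ F))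
            ((Finset.Ico t0 k).image ((cl ∘ T) ∘ F)) := by
          rw [Finset.disjoint_left]
          rintro x hxA hxB
          obtain ⟨a, ha, hax⟩ := Finset.mem_image.mp hxA
          obtain ⟨b, hb, hbx⟩ := Finset.mem_image.mp hxB
          rw [Finset.mem_range] at ha
          rw [Finset.mem_Ico] at hb
          have hab : F a = F b := hinj (hax.trans hbx.symm)
          have := hFinj a b (by omega) (by omega) hab
          omega
        have hGinjM : Set.InjOn ((cl ∘ T) ∘ F) (Finset.Ico t0 k) := by
          intro a ha b hb hab
          simp only [Finset.coe_Ico, Set.mem_Ico] at ha hb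
          exact hFinj a b (by omega) (by omega) (hinj hab)
        have hBX : (Finset.Ico t0 k).image ((cl ∘ T) ∘ F) ⊆
            (Finset.Ico t0 k).image ((cl ∘ T') ∘ F) := by
          intro x hx
          have hx' : x ∈ (Finset.range t0).image ((cl ∘ T) ∘ F) ∪
              (Finset.Ico t0 k).image ((cl ∘ T') ∘ F) := by
            rw [himg]
            exact Finset.mem_union_right _ hx
          rcases Finset.mem_union.mp hx' with h | h
          · exact absurd hx (Finset.disjoint_left.mp hdisj h)
          · exact h
        have hXB : (Finset.Ico t0 k).image ((cl ∘ T) ∘ F) =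
            (Finset.Ico t0 k).image ((cl ∘ T') ∘ F) :=
          Finset.eq_of_subset_of_card_le hBX
            (le_trans Finset.card_image_le
              (le_of_eq (Finset.card_image_of_injOn hGinjM).symm))
        rw [hIco, Finset.image_union, Finset.image_union, hS, ← hXB]
      · -- the vertex at position i+t0+1 differs
        rw [hFt0]
        exact ht0ne
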